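/- With the lifting setup below, the Eisenbud operators are independent of the choice of lifting up to homotopy: if d̃_n, d̃'_n : C̃_n → C̃_{n−1} are two families of Q-linear maps on the same free Q-modules C̃_n, both reducing modulo (f_1,…,f_c) to the differentials of C, with d̃_{n−1}∘d̃_n = Σ_k f_k·t̃_{k,n} and d̃'_{n−1}∘d̃'_n = Σ_k f_k·t̃'_{k,n}, then for each k the reduced families t_{k} and t'_{k} are homotopic: there exist R-linear maps λ_n : C_n → C_{n−1} with t_{k,n} − t'_{k,n} = d_{n−1}∘λ_n + λ_{n−1}∘d_n for all n. -/

import Mathlib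

/-!
Statement 4: the Eisenbud operators are independent, up to homotopy, of the choice of
lifting of the differentials of `C`.

A complex of `R = Q/(f₁,…,f_c)`-modules with underlying modules `R ⊗[Q] C̃_n` is given
two lifts `d̃`, `d̃'` of its differentials (i.e. `d̃ ⊗ R = d̃' ⊗ R`), with
`d̃ ∘ d̃ = Σ f_k • t̃_k` and `d̃' ∘ d̃' = Σ f_k • t̃'_k`; the reduced families
`t_k = t̃_k ⊗ R` and `t'_k = t̃'_k ⊗ R` are homotopic.
-/

open TensorProduct

/-- The quotient ring `R = Q/(f₁,…,f_c)`. -/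
abbrev Rquot (Q : Type) [CommRing Q] {c : ℕ} (f : Fin c → Q) : Type :=
  Q ⧸ Ideal.span (Set.range f)

section Aux

variable {Q : Type} [CommRing Q] {c : ℕ} {f : Fin c → Q}

lemma aux_ring_aux (hreg : RingTheory.Sequence.IsWeaklyRegular Q (List.ofFn f)) :
    ∀ (m : ℕ) (hm : m ≤ c) (g : Fin m → Q),
      (∑ i, g i * f (Fin.castLE hm i)) = 0 → ∀ i, g i ∈ Ideal.span (Set.range f) := by
  intro m
  induction m with
  | zero => intro _ _ _ i; exact i.elim0
  | succ m ih =>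
    intro hm g hg i
    have hm' : m ≤ c := Nat.le_of_succ_le hm
    have hmc : m < c := hm
    set J : Ideal Q := Ideal.span (Set.range (fun i : Fin m => f (Fin.castLE hm' i))) with hJ
    have hJle : J ≤ Ideal.span (Set.range f) :=
      Ideal.span_mono (Set.range_comp_subset_range _ f)
    rw [Fin.sum_univ_castSucc] at hg
    have hsum : (∑ i : Fin m, g i.castSucc * f (Fin.castLE hm' i))
        + g (Fin.last m) * f (Fin.castLE hm (Fin.last m)) = 0 := hg
    -- J equals the ideal of the take-list
    have hJtake : Ideal.ofList ((List.ofFn f).take m) = J := by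
      rw [← Fin.ofFn_take_eq_take_ofFn hm' f, hJ]
      have hset : {r : Q | r ∈ List.ofFn (Fin.take m hm' f)}
          = Set.range (fun i : Fin m => f (Fin.castLE hm' i)) := by
        ext x
        simp [List.mem_ofFn, Fin.take]
      show Ideal.span _ = _
      rw [hset]
    -- membership of the "last" coefficient
    have hflast : f (Fin.castLE hm (Fin.last m)) * g (Fin.last m) ∈ J := by
      rw [mul_comm]
      have : g (Fin.last m) * f (Fin.castLE hm (Fin.last m))
          = -(∑ i : Fin m, g i.castSucc * f (Fin.castLE hm' i)) := by
        exact eq_neg_of_add_eq_zero_right hsum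
      rw [this]
      refine neg_mem (Ideal.sum_mem _ fun i _ => ?_)
      exact Ideal.mul_mem_left _ _ (Ideal.subset_span ⟨i, rfl⟩)
    -- regularity of f_m modulo J
    have hlen : m < (List.ofFn f).length := by simpa using hmc
    have hregm := hreg.regular_mod_prev m hlen
    have hgetm : (List.ofFn f)[m] = f (Fin.castLE hm (Fin.last m)) := by
      rw [List.getElem_ofFn]; congr 1
    rw [hgetm, hJtake] at hregm
    -- conclude g (last) ∈ J • ⊤
    have hmem : g (Fin.last m) ∈ (J • ⊤ : Submodule Q Q) := by
      have h1 : (f (Fin.castLE hm (Fin.last m))) •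
          (Submodule.Quotient.mk (g (Fin.last m)) :
            Q ⧸ (J • ⊤ : Submodule Q Q)) = 0 := by
        rw [← Submodule.Quotient.mk_smul, Submodule.Quotient.mk_eq_zero]
        have heq : f (Fin.castLE hm (Fin.last m)) • g (Fin.last m)
            = (f (Fin.castLE hm (Fin.last m)) * g (Fin.last m)) • (1 : Q) := by
          simp [smul_eq_mul]
        rw [heq]
        exact Submodule.smul_mem_smul hflast Submodule.mem_top
      have h0 : (f (Fin.castLE hm (Fin.last m))) •
          (0 : Q ⧸ (J • ⊤ : Submodule Q Q)) = 0 := smul_zero _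
      have := hregm (h1.trans h0.symm)
      rwa [Submodule.Quotient.mk_eq_zero] at this
    have hmemJ : g (Fin.last m) ∈ J := by
      refine Submodule.smul_le.mpr (fun r hr n _ => ?_) hmem
      rw [smul_eq_mul]
      exact Ideal.mul_mem_right n J hr
    -- write g (last) = ∑ b i * f i
    obtain ⟨b, hb⟩ := (Submodule.mem_span_range_iff_exists_fun Q).mp hmemJ
    -- new coefficients
    set g' : Fin m → Q := fun i =>
      g i.castSucc + f (Fin.castLE hm (Fin.last m)) * b i with hg'
    have hg'sum : ∑ i, g' i * f (Fin.castLE hm' i) = 0 := by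
      have expand : ∑ i, g' i * f (Fin.castLE hm' i)
          = (∑ i : Fin m, g i.castSucc * f (Fin.castLE hm' i))
            + f (Fin.castLE hm (Fin.last m)) * (∑ i, b i • f (Fin.castLE hm' i)) := by
        rw [Finset.mul_sum, ← Finset.sum_add_distrib]
        refine Finset.sum_congr rfl fun i _ => ?_
        simp [hg', add_mul, smul_eq_mul]
        ring
      rw [expand, hb, mul_comm]
      exact hsum
    have hind := ih hm' g' hg'sum
    -- conclude for each i : Fin (m+1)
    refine Fin.lastCases ?_ ?_ i
    · exact hJle hmemJ
    · intro j
      have : g j.castSucc = g' j - f (Fin.castLE hm (Fin.last m)) * b j := by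
        simp [hg']
      rw [this]
      refine sub_mem (hind j) (Ideal.mul_mem_right _ _ ?_)
      exact Ideal.subset_span ⟨_, rfl⟩

lemma aux_ring (hreg : RingTheory.Sequence.IsWeaklyRegular Q (List.ofFn f))
    (g : Fin c → Q) (h : ∑ i, g i * f i = 0) (i : Fin c) :
    g i ∈ Ideal.span (Set.range f) := by
  have := aux_ring_aux hreg c le_rfl g (by simpa using h) i
  exact this


lemma aux_mod {M : Type} [AddCommGroup M] [Module Q M] (hfreeM : Module.Free Q M)
    (hreg : RingTheory.Sequence.IsWeaklyRegular Q (List.ofFn f))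
    (a : Fin c → M) (h : ∑ k, f k • a k = 0) (k : Fin c) :
    a k ∈ Ideal.span (Set.range f) • (⊤ : Submodule Q M) := by
  haveI := hfreeM
  let b := Module.Free.chooseBasis Q M
  have hcoord : ∀ i, ∑ j, b.repr (a j) i * f j = 0 := by
    intro i
    have h0 : b.repr (∑ j, f j • a j) i = 0 := by
      rw [h, map_zero]; rfl
    rw [map_sum, Finsupp.finset_sum_apply] at h0
    rw [← h0]
    refine Finset.sum_congr rfl fun j _ => ?_
    rw [map_smul, Finsupp.smul_apply, smul_eq_mul, mul_comm]
  have hrepr : ∀ i, b.repr (a k) i ∈ Ideal.span (Set.range f) := fun i =>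
    aux_ring hreg (fun j => b.repr (a j) i) (hcoord i) k
  have hx := b.linearCombination_repr (a k)
  rw [← hx, Finsupp.linearCombination_apply, Finsupp.sum]
  exact Submodule.sum_mem _ fun i _ =>
    Submodule.smul_mem_smul (hrepr i) Submodule.mem_top

lemma aux_mem_iff {M : Type} [AddCommGroup M] [Module Q M] (m : M) :
    m ∈ Ideal.span (Set.range f) • (⊤ : Submodule Q M)
      ↔ ∃ a : Fin c → M, m = ∑ j, f j • a j := by
  constructor
  · intro hm
    refine Submodule.smul_induction_on hm ?_ ?_
    · intro r hr n _
      obtain ⟨g, hg⟩ := (Submodule.mem_span_range_iff_exists_fun Q).mp hr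
      refine ⟨fun j => g j • n, ?_⟩
      rw [← hg, Finset.sum_smul]
      exact Finset.sum_congr rfl fun j _ => by
        rw [smul_eq_mul, smul_smul, mul_comm]
    · rintro x y ⟨ax, hax⟩ ⟨ay, hay⟩
      exact ⟨fun j => ax j + ay j, by
        rw [hax, hay, ← Finset.sum_add_distrib]
        exact Finset.sum_congr rfl fun j _ => (smul_add _ _ _).symm⟩
  · rintro ⟨a, rfl⟩
    exact Submodule.sum_mem _ fun j _ =>
      Submodule.smul_mem_smul (Ideal.subset_span ⟨j, rfl⟩) Submodule.mem_top

lemma aux_tmul_zero {M : Type} [AddCommGroup M] [Module Q M] (m : M) :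
    (1 : Rquot Q f) ⊗ₜ[Q] m = (0 : Rquot Q f ⊗[Q] M)
      ↔ m ∈ Ideal.span (Set.range f) • (⊤ : Submodule Q M) := by
  set I := Ideal.span (Set.range f)
  have h1 : TensorProduct.quotTensorEquivQuotSMul M I ((1 : Q ⧸ I) ⊗ₜ[Q] m)
      = Submodule.Quotient.mk m := by
    have h2 : (1 : Q ⧸ I) = Ideal.Quotient.mk I 1 := rfl
    rw [h2, TensorProduct.quotTensorEquivQuotSMul_mk_tmul, one_smul]
  constructor
  · intro h0
    have h3 := congrArg (TensorProduct.quotTensorEquivQuotSMul M I) h0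
    rw [h1, map_zero] at h3
    rwa [Submodule.Quotient.mk_eq_zero] at h3
  · intro hm
    apply (TensorProduct.quotTensorEquivQuotSMul M I).injective
    rw [h1, map_zero, Submodule.Quotient.mk_eq_zero]
    exact hm

lemma aux_baseChange_zero {M N : Type} [AddCommGroup M] [Module Q M]
    [AddCommGroup N] [Module Q N] (h : M →ₗ[Q] N) :
    h.baseChange (Rquot Q f) = 0
      ↔ ∀ x, h x ∈ Ideal.span (Set.range f) • (⊤ : Submodule Q N) := by
  constructor
  · intro h0 x
    have hz : h.baseChange (Rquot Q f) ((1 : Rquot Q f) ⊗ₜ[Q] x) = 0 := by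
      rw [h0]; rfl
    rw [LinearMap.baseChange_tmul] at hz
    exact (aux_tmul_zero _).mp hz
  · intro hx
    apply LinearMap.ext
    intro z
    induction z using TensorProduct.induction_on with
    | zero => simp
    | tmul r x =>
      rw [LinearMap.baseChange_tmul, LinearMap.zero_apply]
      have h1 : (1 : Rquot Q f) ⊗ₜ[Q] h x = (0 : Rquot Q f ⊗[Q] N) :=
        (aux_tmul_zero _).mpr (hx x)
      calc r ⊗ₜ[Q] h x = r • ((1 : Rquot Q f) ⊗ₜ[Q] h x) := by
            rw [TensorProduct.smul_tmul', smul_eq_mul, mul_one]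
        _ = 0 := by rw [h1, smul_zero]
    | add x y ihx ihy => simp [map_add, ihx, ihy]

lemma aux_decomp {M N : Type} [AddCommGroup M] [Module Q M] (hfreeM : Module.Free Q M)
    [AddCommGroup N] [Module Q N] (h : M →ₗ[Q] N)
    (hx : ∀ x, h x ∈ Ideal.span (Set.range f) • (⊤ : Submodule Q N)) :
    ∃ σ : Fin c → (M →ₗ[Q] N), h = ∑ j, f j • σ j := by
  haveI := hfreeM
  let b := Module.Free.chooseBasis Q M
  choose a ha using fun i => (aux_mem_iff (h (b i))).mp (hx (b i))
  refine ⟨fun j => b.constr ℕ fun i => a i j, ?_⟩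
  refine b.ext fun i => ?_
  rw [LinearMap.sum_apply, ha i]
  exact Finset.sum_congr rfl fun j _ => by
    rw [LinearMap.smul_apply, Module.Basis.constr_basis]


lemma aux_baseChange_comp {M N P : Type} [AddCommGroup M] [Module Q M]
    [AddCommGroup N] [Module Q N] [AddCommGroup P] [Module Q P]
    (g : N →ₗ[Q] P) (h : M →ₗ[Q] N) :
    (g ∘ₗ h).baseChange (Rquot Q f)
      = g.baseChange (Rquot Q f) ∘ₗ h.baseChange (Rquot Q f) := by
  apply LinearMap.ext
  intro z
  induction z using TensorProduct.induction_on with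
  | zero => simp
  | tmul r x => simp [LinearMap.baseChange_tmul]
  | add x y ihx ihy => simp [map_add, ihx, ihy]

end Aux

/-- Eisenbud operators attached to two lifts of the same differentials
are homotopic. -/
theorem eisenbud_operators_independent_of_lift
    (Q : Type) [CommRing Q] (c : ℕ) (f : Fin c → Q)
    (hreg : RingTheory.Sequence.IsRegular Q (List.ofFn f))
    (Ct : ℤ → Type) [∀ n, AddCommGroup (Ct n)] [∀ n, Module Q (Ct n)]
    (hfree : ∀ n, Module.Free Q (Ct n)) (hfin : ∀ n, Module.Finite Q (Ct n))
    (dt dt' : ∀ n : ℤ, Ct (n + 1) →ₗ[Q] Ct n)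
    (hsame : ∀ n : ℤ,
      (dt n).baseChange (Rquot Q f) = (dt' n).baseChange (Rquot Q f))
    (tt tt' : Fin c → ∀ n : ℤ, Ct (n + 1 + 1) →ₗ[Q] Ct n)
    (hdd : ∀ (n : ℤ) (x : Ct (n + 1 + 1)),
      dt n (dt (n + 1) x) = ∑ k, f k • tt k n x)
    (hdd' : ∀ (n : ℤ) (x : Ct (n + 1 + 1)),
      dt' n (dt' (n + 1) x) = ∑ k, f k • tt' k n x) :
    ∀ k : Fin c,
      ∃ lam : ∀ n : ℤ, (Rquot Q f ⊗[Q] Ct (n + 1)) →ₗ[Rquot Q f] (Rquot Q f ⊗[Q] Ct n),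
        ∀ (n : ℤ) (x : Rquot Q f ⊗[Q] Ct (n + 1 + 1)),
          (tt k n).baseChange (Rquot Q f) x - (tt' k n).baseChange (Rquot Q f) x =
            (dt n).baseChange (Rquot Q f) (lam (n + 1) x) +
              lam n ((dt (n + 1)).baseChange (Rquot Q f) x) := by
  intro k
  have hw := hreg.toIsWeaklyRegular
  -- decompose the difference of the lifts
  have hδ : ∀ n : ℤ, ∃ σ : Fin c → (Ct (n + 1) →ₗ[Q] Ct n),
      dt' n - dt n = ∑ j, f j • σ j := by
    intro n
    apply aux_decomp (hfree (n + 1))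
    intro x
    have h0 : (dt' n - dt n).baseChange (Rquot Q f) = 0 := by
      rw [LinearMap.baseChange_sub, ← hsame n]; exact sub_self ((dt n).baseChange (Rquot Q f))
    exact (aux_baseChange_zero _).mp h0 x
  choose σ hσ using hδ
  -- the key vanishing
  have key : ∀ n : ℤ,
      ((tt' k n - tt k n) - ((dt' n) ∘ₗ (σ (n + 1) k) + (σ n k) ∘ₗ (dt (n + 1)))).baseChange
        (Rquot Q f) = 0 := by
    intro n
    rw [aux_baseChange_zero]
    intro x
    refine aux_mod (hfree n) hw
      (fun j => ((tt' j n - tt j n)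
        - ((dt' n) ∘ₗ (σ (n + 1) j) + (σ n j) ∘ₗ (dt (n + 1)))) x) ?_ k
    have e1 : ∑ j, f j • (tt' j n) x = dt' n (dt' (n + 1) x) := (hdd' n x).symm
    have e2 : ∑ j, f j • (tt j n) x = dt n (dt (n + 1) x) := (hdd n x).symm
    have happ : ∀ (m : ℤ) (y : Ct (m + 1)),
        ∑ j, f j • σ m j y = dt' m y - dt m y := by
      intro m y
      have h1 : (∑ j, f j • σ m j) y = ∑ j, f j • σ m j y := by
        rw [LinearMap.sum_apply]
        exact Finset.sum_congr rfl fun j _ => LinearMap.smul_apply _ _ _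
      rw [← h1, ← hσ m, LinearMap.sub_apply]
    have e3 : ∑ j, f j • dt' n (σ (n + 1) j x)
        = dt' n (dt' (n + 1) x) - dt' n (dt (n + 1) x) := by
      have h1 : ∑ j, f j • dt' n (σ (n + 1) j x) = dt' n (∑ j, f j • σ (n + 1) j x) := by
        rw [map_sum]
        exact Finset.sum_congr rfl fun j _ => (map_smul _ _ _).symm
      rw [h1, happ (n + 1) x, map_sub]
    have e4 : ∑ j, f j • σ n j (dt (n + 1) x)
        = dt' n (dt (n + 1) x) - dt n (dt (n + 1) x) := happ n (dt (n + 1) x)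
    calc ∑ j, f j • ((tt' j n - tt j n)
          - ((dt' n) ∘ₗ (σ (n + 1) j) + (σ n j) ∘ₗ (dt (n + 1)))) x
        = ∑ j, (f j • (tt' j n) x - f j • (tt j n) x
            - (f j • dt' n (σ (n + 1) j x) + f j • σ n j (dt (n + 1) x))) := by
          refine Finset.sum_congr rfl fun j _ => ?_
          simp only [LinearMap.sub_apply, LinearMap.add_apply, LinearMap.comp_apply,
            smul_sub, smul_add]
      _ = (∑ j, f j • (tt' j n) x) - (∑ j, f j • (tt j n) x)
            - ((∑ j, f j • dt' n (σ (n + 1) j x)) + (∑ j, f j • σ n j (dt (n + 1) x))) := by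
          rw [Finset.sum_sub_distrib, Finset.sum_sub_distrib, Finset.sum_add_distrib]
      _ = 0 := by rw [e1, e2, e3, e4]; abel
  -- the homotopy
  refine ⟨fun n => -((σ n k).baseChange (Rquot Q f)), ?_⟩
  intro n x
  have hkey := congrArg (fun (g : _ →ₗ[Rquot Q f] _) => g x) (key n)
  simp only [LinearMap.baseChange_sub, LinearMap.baseChange_add,
    aux_baseChange_comp, LinearMap.sub_apply, LinearMap.add_apply,
    LinearMap.comp_apply, LinearMap.zero_apply] at hkey
  have h2 := sub_eq_zero.mp hkey
  rw [LinearMap.neg_apply, LinearMap.neg_apply, hsame n, map_neg]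
  rw [← neg_sub ((tt' k n).baseChange (Rquot Q f) x)
    ((tt k n).baseChange (Rquot Q f) x), h2, neg_add]
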